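/- There exists an instance with 2 agents and 4 goods, each agent having a non-decreasing submodular valuation function, such that the Round-Robin mechanism admits no (3/4 + ε)-approximate pure Nash equilibrium for any ε > 0. Concretely: all singletons have value 2 for both agents, all 3-sets and 4-sets have value 4, agent 1's values on 2-sets are 3 except v_1({g_1,g_4}) = v_1({g_2,g_3}) = 4, and agent 2's values on 2-sets are 4 except v_2({g_1,g_4}) = v_2({g_2,g_3}) = 3; these valuations are submodular, and in every outcome of Round-Robin some agent receives value 3 but can deviate to obtain value 4. -/
import Mathlib


/-! Round-Robin mechanism: given reported strict total orders (duplicate-free lists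
ranking the goods), in turns `t = 0, 1, 2, …` agent `t % n` receives her reported-top
good among those not yet allocated. -/

variable {G : Type*} [DecidableEq G]

/-- Goods remaining after `t` turns of the Round-Robin mechanism. -/
def rrRemaining {n : ℕ} (hn : 0 < n) (pref : Fin n → List G) (goods : Finset G) :
    ℕ → Finset G
  | 0 => goods
  | t + 1 =>
    let S := rrRemaining hn pref goods t
    match (pref ⟨t % n, Nat.mod_lt t hn⟩).find? (fun g => decide (g ∈ S)) with
    | none => S
    | some g => S.erase g

/-- The good picked at turn `t` (agent `t % n` picks her reported-top available good). -/
def rrPicked {n : ℕ} (hn : 0 < n) (pref : Fin n → List G) (goods : Finset G) (t : ℕ) :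
    Option G :=
  (pref ⟨t % n, Nat.mod_lt t hn⟩).find? fun g => decide (g ∈ rrRemaining hn pref goods t)

/-- The bundle allocated to agent `i` by Round-Robin. -/
def rrBundle {n : ℕ} (hn : 0 < n) (pref : Fin n → List G) (goods : Finset G) (i : Fin n) :
    Finset G :=
  ((Finset.range goods.card).filter fun t => t % n = i.val).biUnion fun t =>
    (rrPicked hn pref goods t).toFinset

/-- Goods allocated strictly before turn `t`. -/
def rrAllocatedBefore {n : ℕ} (hn : 0 < n) (pref : Fin n → List G) (goods : Finset G)
    (t : ℕ) : Finset G := goods \ rrRemaining hn pref goods t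

/-- A valid report is a strict total order on the goods: a duplicate-free list
enumerating exactly the goods. -/
def ValidReport (goods : Finset G) (l : List G) : Prop :=
  l.Nodup ∧ ∀ g, g ∈ l ↔ g ∈ goods

/-- The valuations of the two agents over four goods `g_1,…,g_4` (encoded `0,…,3 : Fin 4`):
all singletons have value 2, all sets of size ≥ 3 have value 4; agent 1's 2-sets have
value 3 except `{g_1,g_4}` and `{g_2,g_3}` which have value 4; agent 2's 2-sets have
value 4 except `{g_1,g_4}` and `{g_2,g_3}` which have value 3. -/
noncomputable def vNo : Fin 2 → Finset (Fin 4) → ℝ := fun i S =>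
  if S.card = 0 then 0
  else if S.card = 1 then 2
  else if 3 ≤ S.card then 4
  else if S = {0, 3} ∨ S = {1, 2} then (if i = 0 then 4 else 3)
  else (if i = 0 then 3 else 4)


/-- Natural-number version of `vNo`. -/
def vN : Fin 2 → Finset (Fin 4) → ℕ := fun i S =>
  if S.card = 0 then 0
  else if S.card = 1 then 2
  else if 3 ≤ S.card then 4
  else if S = {0, 3} ∨ S = {1, 2} then (if i = 0 then 4 else 3)
  else (if i = 0 then 3 else 4)

lemma vNo_eq (i : Fin 2) (S : Finset (Fin 4)) : vNo i S = (vN i S : ℝ) := by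
  simp only [vNo, vN]; split_ifs <;> norm_num

lemma monoN : ∀ i : Fin 2, ∀ S T : Finset (Fin 4), S ⊆ T → vN i S ≤ vN i T := by decide

lemma submodN : ∀ i : Fin 2, ∀ S T : Finset (Fin 4), ∀ g, S ⊆ T → g ∉ T →
    vN i (insert g T) + vN i S ≤ vN i (insert g S) + vN i T := by decide

/-- All 24 permutations of the four goods. -/
def perms : List (List (Fin 4)) := [[0,1,2,3], [0,1,3,2], [0,2,1,3], [0,2,3,1], [0,3,1,2], [0,3,2,1], [1,0,2,3], [1,0,3,2], [1,2,0,3], [1,2,3,0], [1,3,0,2], [1,3,2,0], [2,0,1,3], [2,0,3,1], [2,1,0,3], [2,1,3,0], [2,3,0,1], [2,3,1,0], [3,0,1,2], [3,0,2,1], [3,1,0,2], [3,1,2,0], [3,2,0,1], [3,2,1,0]]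

lemma valid_of_mem_perms : ∀ l ∈ perms,
    l.Nodup ∧ ∀ g, g ∈ l ↔ g ∈ (Finset.univ : Finset (Fin 4)) := by decide

lemma quad_mem_perms : ∀ a b c d : Fin 4, ([a,b,c,d] : List (Fin 4)).Nodup →
    [a,b,c,d] ∈ perms := by decide

lemma mem_perms_of_valid {l : List (Fin 4)}
    (h : ValidReport (Finset.univ : Finset (Fin 4)) l) : l ∈ perms := by
  have htf : l.toFinset = (Finset.univ : Finset (Fin 4)) := by
    ext g; simp [List.mem_toFinset, h.2 g]
  have h4 : l.length = 4 := by
    have := List.toFinset_card_of_nodup h.1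
    rw [htf] at this
    simpa using this.symm
  match l, h4 with
  | [a, b, c, d], _ => exact quad_mem_perms a b c d h.1

set_option maxRecDepth 100000 in
set_option maxHeartbeats 8000000 in
lemma key : ∀ l0 ∈ perms, ∀ l1 ∈ perms, ∃ i : Fin 2, ∃ l' ∈ perms,
    vN i (rrBundle (n := 2) (by norm_num) (Function.update ![l0, l1] i l')
      Finset.univ i) = 4 ∧
    vN i (rrBundle (n := 2) (by norm_num) ![l0, l1] Finset.univ i) = 3 := by decide

lemma final_ineq (ε : ℝ) (hε : 0 < ε) {i : Fin 2} {A B : Finset (Fin 4)}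
    (h4 : vN i A = 4) (h3 : vN i B = 3) : (3 / 4 + ε) * vNo i A > vNo i B := by
  rw [vNo_eq, vNo_eq, h4, h3]; push_cast; nlinarith

/-- There is an instance with 2 agents and 4 goods, with non-decreasing submodular
valuations (namely `vNo`), in which the Round-Robin mechanism admits no
`(3/4 + ε)`-approximate pure Nash equilibrium for any `ε > 0`: for every reported
profile some agent can unilaterally deviate and multiply her true value by more
than `1/(3/4 + ε)`. -/
theorem no_three_quarters_PNE :
    (∀ i : Fin 2, ∀ S T : Finset (Fin 4), S ⊆ T → vNo i S ≤ vNo i T) ∧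
    (∀ i : Fin 2, ∀ S T : Finset (Fin 4), ∀ g, S ⊆ T → g ∉ T →
      vNo i (insert g T) - vNo i T ≤ vNo i (insert g S) - vNo i S) ∧
    (∀ ε : ℝ, 0 < ε →
      ∀ pref : Fin 2 → List (Fin 4),
        (∀ i, ValidReport (Finset.univ : Finset (Fin 4)) (pref i)) →
        ∃ (i : Fin 2) (l' : List (Fin 4)),
          ValidReport (Finset.univ : Finset (Fin 4)) l' ∧
          (3 / 4 + ε) *
              vNo i (rrBundle (n := 2) (by norm_num)
                (Function.update pref i l') Finset.univ i) >
            vNo i (rrBundle (n := 2) (by norm_num) pref Finset.univ i)) := by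
  refine ⟨?_, ?_, ?_⟩
  · intro i S T h
    rw [vNo_eq, vNo_eq, Nat.cast_le]
    exact monoN i S T h
  · intro i S T g hST hgT
    rw [vNo_eq, vNo_eq, vNo_eq, vNo_eq, sub_le_sub_iff]
    exact_mod_cast submodN i S T g hST hgT
  · intro ε hε pref hpref
    have hpe : pref = ![pref 0, pref 1] := by
      funext j; fin_cases j <;> rfl
    obtain ⟨i, l', hl'mem, h4, h3⟩ :=
      key (pref 0) (mem_perms_of_valid (hpref 0)) (pref 1) (mem_perms_of_valid (hpref 1))
    refine ⟨i, l', valid_of_mem_perms l' hl'mem, ?_⟩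
    rw [hpe]
    exact final_ineq ε hε h4 h3
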